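/- arXiv:1310.4083 — 6 statements merged into one kernel-verified Lean document; each statement's English description precedes it below -/
import Mathlib

section
/- In a finite modular lattice, if X covers Y, then the covering interval [X,Y] is equivalent under the projectivity relation ≡ to a covering interval [A,B] where A is join irreducible. -/
variable {α : Type*}

/-- One step of the projectivity relation on intervals: `[A ⊔ B, B] ≡ [A, A ⊓ B]`.
An interval `[X,Y]` (with `Y ≤ X`) is encoded as the pair `(X, Y)`. -/
def IntervalTranspose [Lattice α] (p q : α × α) : Prop :=
  ∃ a b : α, p = (a ⊔ b, b) ∧ q = (a, a ⊓ b)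

/-- The projectivity relation `≡` on intervals: the smallest equivalence relation
with `[A ⊔ B, B] ≡ [A, A ⊓ B]`. -/
def IntervalEquiv [Lattice α] : α × α → α × α → Prop :=
  Relation.EqvGen IntervalTranspose

/-- A lattice is multiplicity free if along any maximal chain the covering
intervals are pairwise inequivalent under the projectivity relation. -/
def MultFree (α : Type*) [Lattice α] : Prop :=
  ∀ C : Set α, IsMaxChain (· ≤ ·) C →
    ∀ a ∈ C, ∀ b ∈ C, ∀ c ∈ C, ∀ d ∈ C,
      b ⋖ a → d ⋖ c → IntervalEquiv (a, b) (c, d) → a = c ∧ b = d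

/-- In a finite modular lattice, every covering interval `[X,Y]` is projectively
equivalent to a covering interval `[A,B]` with `A` join irreducible. -/
theorem covering_interval_equiv_supIrred [Lattice α] [Fintype α] [IsModularLattice α]
    {X Y : α} (h : Y ⋖ X) :
    ∃ A B : α, SupIrred A ∧ B ⋖ A ∧ IntervalEquiv (X, Y) (A, B) := by
  classical
  -- the set of Z with Z ⊔ Y = X
  have hS : (Finset.univ.filter (fun Z : α => Z ⊔ Y = X)).Nonempty := by
    refine ⟨X, ?_⟩
    simp [sup_eq_left.mpr h.le]
  obtain ⟨A, hA, hAmin⟩ : ∃ m ∈ Finset.univ.filter (fun Z : α => Z ⊔ Y = X),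
      ∀ x ∈ Finset.univ.filter (fun Z : α => Z ⊔ Y = X), ¬ x < m := by
    obtain ⟨m, hm⟩ := Finset.exists_minimal hS
    exact ⟨m, hm.1, fun x hx hlt => lt_irrefl _ (lt_of_lt_of_le hlt (hm.2 hx hlt.le))⟩
  simp only [Finset.mem_filter, Finset.mem_univ, true_and] at hA
  have hAmin' : ∀ Z : α, Z ⊔ Y = X → ¬ Z < A := by
    intro Z hZ
    exact hAmin Z (by simp [hZ])
  have hAY : ¬ A ≤ Y := by
    intro hle
    have : X = Y := by rw [← hA, sup_eq_right.mpr hle]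
    exact h.ne' this
  refine ⟨A, A ⊓ Y, ⟨?_, ?_⟩, ?_, ?_⟩
  · -- ¬ IsMin A
    intro hmin
    exact hAY ((hmin inf_le_left).trans inf_le_right)
  · -- irreducibility
    intro b c hbc
    by_contra hne
    push_neg at hne
    obtain ⟨hb, hc⟩ := hne
    have hbA : b < A := lt_of_le_of_ne (hbc ▸ le_sup_left) hb
    have hcA : c < A := lt_of_le_of_ne (hbc ▸ le_sup_right) hc
    have hbY : b ≤ Y := by
      by_contra hbY
      have h1 : Y < b ⊔ Y := lt_of_le_of_ne le_sup_right (fun e => hbY (sup_eq_right.mp e.symm))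
      have h2 : b ⊔ Y ≤ X := sup_le (hbA.le.trans (hA ▸ le_sup_left)) h.le
      exact hAmin' b (h2.eq_of_not_lt (h.2 h1)) hbA
    have hcY : c ≤ Y := by
      by_contra hcY
      have h1 : Y < c ⊔ Y := lt_of_le_of_ne le_sup_right (fun e => hcY (sup_eq_right.mp e.symm))
      have h2 : c ⊔ Y ≤ X := sup_le (hcA.le.trans (hA ▸ le_sup_left)) h.le
      exact hAmin' c (h2.eq_of_not_lt (h.2 h1)) hcA
    exact hAY (hbc ▸ sup_le hbY hcY)
  · -- A ⊓ Y ⋖ A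
    have : Y ⋖ A ⊔ Y := hA ▸ h
    exact inf_covBy_of_covBy_sup_right this
  · -- the equivalence in one step
    exact Relation.EqvGen.rel _ _ ⟨A, Y, by rw [hA], rfl⟩
end

section
/- The perspectivity relation → on covering intervals of a lattice is transitive: if [A,B] → [U,V] and [U,V] → [X,Y], then [A,B] → [X,Y]. -/
variable {α : Type*}

/-- The perspectivity relation `[U,V] → [X,Y]` on covering intervals:
`V ⋖ U`, `Y ⋖ X`, `U ⊔ Y = X` and `U ⊓ Y = V`. Intervals are encoded as pairs. -/
def Persp [Lattice α] (p q : α × α) : Prop :=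
  p.2 ⋖ p.1 ∧ q.2 ⋖ q.1 ∧ p.1 ⊔ q.2 = q.1 ∧ p.1 ⊓ q.2 = p.2

/-- The perspectivity relation on covering intervals is transitive. -/
theorem persp_trans [Lattice α] {p q r : α × α} (h1 : Persp p q) (h2 : Persp q r) :
    Persp p r := by
  obtain ⟨hBA, hVU, hAV, hAVb⟩ := h1
  obtain ⟨-, hYX, hUY, hUYv⟩ := h2
  have hAU : p.1 ≤ q.1 := hAV ▸ le_sup_left
  have hinf : p.1 ⊓ r.2 = p.2 := by
    rw [← hAVb, ← hUYv, ← inf_assoc, inf_eq_left.2 hAU]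
  refine ⟨hBA, hYX, ?_, hinf⟩
  have hle : p.1 ⊔ r.2 ≤ r.1 := hUY ▸ sup_le_sup_right hAU _
  rcases hYX.eq_or_eq (le_sup_right : r.2 ≤ p.1 ⊔ r.2) hle with h | h
  · exfalso
    have hAY : p.1 ≤ r.2 := sup_eq_right.1 h
    have : p.1 ≤ q.2 := hUYv ▸ le_inf hAU hAY
    have : q.1 = q.2 := by rw [← hAV, sup_eq_right.2 this]
    exact hVU.lt.ne' this
  · exact h
end

section
/- Let Λ be a finite distributive multiplicity-free lattice, and let X, Y be join irreducibles with associated simple lattice factors x, y. If X covers Y in the poset of join irreducibles of Λ (i.e., Y < X and no join irreducible lies strictly between), then Ext_Λ(x,y) ≠ 0, i.e., there is a length-two uniserial interval [u,w] with unique intermediate element v such that [u,v] is in class x and [v,w] is in class y. -/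
variable {α : Type*}

/-- If `a` is sup-irreducible and `a0 ⋖ a`, every element strictly below `a` is `≤ a0`. -/
lemma le_of_lt_supIrred [Lattice α] {a a0 z : α} (ha : SupIrred a) (ha0 : a0 ⋖ a)
    (hz : z < a) : z ≤ a0 := by
  by_contra h
  have h1 : a0 < a0 ⊔ z := lt_of_le_of_ne le_sup_left (fun he => h (he ▸ le_sup_right))
  have h2 : a0 ⊔ z = a := ((sup_le ha0.1.le hz.le).lt_or_eq).resolve_left (ha0.2 h1)
  rcases ha.2 h2 with h3 | h3
  · exact ha0.1.ne h3
  · exact hz.ne h3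

/-- In a finite distributive multiplicity-free lattice, if the join irreducible `X` covers
the join irreducible `Y` in the poset of join irreducibles, then `Ext_Λ(x,y) ≠ 0`:
there is a length-two uniserial interval `[u,w]` with intermediate element `v` such that
`[u,v]` is in the class of `[X,X⁰]` and `[v,w]` in the class of `[Y,Y⁰]`. -/
theorem ext_ne_zero_of_covers [DistribLattice α] [Fintype α] (hmf : MultFree α)
    {X X0 Y Y0 : α} (hX : SupIrred X) (hY : SupIrred Y) (hX0 : X0 ⋖ X) (hY0 : Y0 ⋖ Y)
    (hlt : Y < X) (hbetween : ∀ Z : α, SupIrred Z → Y < Z → Z < X → False) :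
    ∃ u v w : α, v ⋖ u ∧ w ⋖ v ∧ (∀ z : α, w < z → z < u → z = v) ∧
      IntervalEquiv (u, v) (X, X0) ∧ IntervalEquiv (v, w) (Y, Y0) := by
  classical
  haveI : Nonempty α := ⟨X⟩
  letI : OrderBot α :=
    { bot := Finset.univ.inf' Finset.univ_nonempty id
      bot_le := fun a => Finset.inf'_le id (Finset.mem_univ a) }
  -- basic facts
  have hYX0 : Y ≤ X0 := le_of_lt_supIrred hX hX0 hlt
  have hY0X0 : Y0 ≤ X0 := hY0.1.le.trans hYX0
  -- the element w
  set s : Finset α := Finset.univ.filter (fun z => z ≤ X0 ∧ ¬ Y ≤ z) with hs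
  set w : α := s.sup id with hw
  have hmem : ∀ z : α, z ≤ X0 → ¬ Y ≤ z → z ≤ w := fun z h1 h2 =>
    Finset.le_sup (f := id) (by simp [hs, h1, h2])
  have hwX0 : w ≤ X0 := Finset.sup_le (fun z hz => ((Finset.mem_filter.1 hz).2.1 : z ≤ X0))
  have hYw : ¬ Y ≤ w := by
    intro h
    obtain ⟨i, hi, hYi⟩ := (hY.supPrime.le_finset_sup).1 h
    exact (Finset.mem_filter.1 hi).2.2 hYi
  -- Y ⊓ w = Y0
  have hY0w : Y0 ≤ w := hmem Y0 hY0X0 (fun h => hY0.1.not_ge h)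
  have hinf : Y ⊓ w = Y0 := by
    refine le_antisymm ?_ (le_inf hY0.1.le hY0w)
    exact le_of_lt_supIrred hY hY0 (lt_of_le_of_ne inf_le_left (fun he => hYw (he ▸ inf_le_right)))
  -- X0 = Y ⊔ w
  have hsup : Y ⊔ w = X0 := by
    refine le_antisymm (sup_le hYX0 hwX0) ?_
    obtain ⟨t, ht, hirr⟩ := exists_supIrred_decomposition X0
    rw [← ht]
    refine Finset.sup_le (fun b hb => ?_)
    have hbX0 : b ≤ X0 := ht ▸ Finset.le_sup (f := id) hb
    by_cases hYb : Y ≤ b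
    · rcases eq_or_lt_of_le hYb with h | h
      · exact h ▸ le_sup_left
      · exact (hbetween b (hirr hb) h (lt_of_le_of_lt hbX0 hX0.lt)).elim
    · exact le_sup_right.trans' (hmem b hbX0 hYb)
  -- coverings
  have hwv : w ⋖ X0 := by
    rw [← hsup]
    exact covBy_sup_of_inf_covBy_left (hinf ▸ hY0)
  refine ⟨X, X0, w, hX0, hwv, ?_, Relation.EqvGen.refl _, ?_⟩
  · intro z hwz hzX
    have hzX0 : z ≤ X0 := le_of_lt_supIrred hX hX0 hzX
    by_cases hYz : Y ≤ z
    · exact le_antisymm hzX0 (hsup ▸ sup_le hYz hwz.le)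
    · exact absurd (hmem z hzX0 hYz) hwz.not_ge
  · exact Relation.EqvGen.rel _ _ ⟨Y, w, by rw [hsup], by rw [hinf]⟩
end

section
/- Let Λ be a finite distributive multiplicity-free lattice whose directed Ext graph has acyclic underlying graph. Then for join irreducibles X, Y with tops x, y: X covers Y in the poset of join irreducibles if and only if Ext_Λ(x,y) ≠ 0. -/
variable {α : Type*}

/-- There is an Ext arrow from the simple factor of the join irreducible `A` to that of `B`:
a length-two uniserial interval whose top covering factor is in the class of `A` and whose
bottom covering factor is in the class of `B`. -/
def ExtRel [Lattice α] (A B : α) : Prop :=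
  ∃ A0 B0 u v w : α, A0 ⋖ A ∧ B0 ⋖ B ∧ v ⋖ u ∧ w ⋖ v ∧
    (∀ z : α, w < z → z < u → z = v) ∧
    IntervalEquiv (u, v) (A, A0) ∧ IntervalEquiv (v, w) (B, B0)

/-- The underlying undirected graph of the directed Ext graph, with the simple lattice
factors identified with the join irreducible elements. -/
def ExtGraph (α : Type*) [Lattice α] : SimpleGraph {a : α // SupIrred a} where
  Adj x y := x ≠ y ∧ (ExtRel (x : α) (y : α) ∨ ExtRel (y : α) (x : α))
  symm := ⟨fun x y h => ⟨Ne.symm h.1, h.2.symm⟩⟩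
  loopless := ⟨fun x h => h.1 rfl⟩

/-- The set of sup-primes below the top but not the bottom of an interval is invariant
under the projectivity relation. -/
lemma IntervalEquiv.prime_invariant [DistribLattice α] {p q : α × α}
    (h : IntervalEquiv p q) {J : α} (hJ : SupPrime J) :
    (J ≤ p.1 ∧ ¬ J ≤ p.2) ↔ (J ≤ q.1 ∧ ¬ J ≤ q.2) := by
  induction h with
  | rel p q hpq =>
      obtain ⟨a, b, rfl, rfl⟩ := hpq
      simp only
      constructor
      · rintro ⟨h1, h2⟩
        have ha : J ≤ a := (hJ.le_sup.1 h1).resolve_right h2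
        exact ⟨ha, fun hab => h2 (hab.trans inf_le_right)⟩
      · rintro ⟨h1, h2⟩
        refine ⟨h1.trans le_sup_left, fun hb => h2 (le_inf h1 hb)⟩
  | refl p => exact Iff.rfl
  | symm p q _ ih => exact ih.symm
  | trans p q r _ _ ih1 ih2 => exact ih1.trans ih2

/-- In a finite lattice, if every sup-irreducible below `a` is below `b`, then `a ≤ b`. -/
lemma le_of_forall_supIrred_le [Lattice α] [Fintype α] (a : α) : ∀ b : α,
    (∀ j : α, SupIrred j → j ≤ a → j ≤ b) → a ≤ b := by
  apply WellFoundedLT.induction a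
  intro a ih b h
  by_cases ha : SupIrred a
  · exact h a ha le_rfl
  · rcases not_supIrred.1 ha with hmin | ⟨c, d, hcd, hc, hd⟩
    · exact hmin inf_le_left |>.trans inf_le_right
    · have hc' : c ≤ b := ih c hc b fun j hj hja => h j hj (le_trans hja hc.le)
      have hd' : d ≤ b := ih d hd b fun j hj hja => h j hj (le_trans hja hd.le)
      exact hcd ▸ sup_le hc' hd'

/-- In a finite order, below any `a < b` there is an element covered by `b`. -/
lemma exists_le_covBy_of_lt' [PartialOrder α] [Fintype α] {a b : α} (hab : a < b) :
    ∃ x, a ≤ x ∧ x ⋖ b := by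
  classical
  obtain ⟨x, hx, hmax⟩ := (Finset.univ.filter fun x => a ≤ x ∧ x < b).exists_maximal
    ⟨a, by simp [hab]⟩
  simp only [Finset.mem_filter, Finset.mem_univ, true_and] at hx hmax
  refine ⟨x, hx.1, hx.2, fun z hxz hzb => hxz.not_ge (hmax ⟨hx.1.trans hxz.le, hzb⟩ hxz.le)⟩

/-- In a finite distributive multiplicity-free lattice whose Ext graph has acyclic
underlying graph, a join irreducible `X` covers a join irreducible `Y` in the poset of
join irreducibles iff `Ext_Λ(x,y) ≠ 0`. -/
theorem covers_iff_ext_ne_zero [DistribLattice α] [Fintype α] (hmf : MultFree α)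
    (hacyc : (ExtGraph α).IsAcyclic) {X Y : α} (hX : SupIrred X) (hY : SupIrred Y) :
    (Y < X ∧ ∀ Z : α, SupIrred Z → ¬(Y < Z ∧ Z < X)) ↔ ExtRel X Y := by
  classical
  have hXp : SupPrime X := supPrime_iff_supIrred.2 hX
  have hYp : SupPrime Y := supPrime_iff_supIrred.2 hY
  constructor
  · rintro ⟨hYX, hmid⟩
    -- `v` is the unique lower cover of `X`
    obtain ⟨v, hYv, hvX⟩ := exists_le_covBy_of_lt' hYX
    have hlow : ∀ z, z < X → z ≤ v := by
      intro z hz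
      obtain ⟨c, hzc, hcX⟩ := exists_le_covBy_of_lt' hz
      rcases eq_or_ne c v with rfl | hne
      · exact hzc
      · exfalso
        have hvc : ¬ v ≤ c := by
          intro hvc
          rcases hvc.lt_or_eq with hlt | heq
          · exact hvX.2 hlt hcX.lt
          · exact hne heq.symm
        have hsup : c ⊔ v = X := by
          rcases lt_or_eq_of_le (sup_le hcX.le hvX.le) with hlt | heq
          · exact absurd hlt (hcX.2 (left_lt_sup.2 hvc))
          · exact heq
        rcases hX.2 hsup with h | h
        · exact hcX.lt.ne h
        · exact hvX.lt.ne h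
    -- `w` is the join of everything below `v` not above `Y`
    obtain ⟨y0, hy0Y⟩ := not_isMin_iff.1 hY.1
    have hy0 : y0 ∈ Finset.univ.filter fun z => z ≤ v ∧ ¬ Y ≤ z := by
      simp only [Finset.mem_filter, Finset.mem_univ, true_and]
      exact ⟨hlow y0 (hy0Y.trans hYX), fun h => hy0Y.not_ge h⟩
    have hS : (Finset.univ.filter fun z : α => z ≤ v ∧ ¬ Y ≤ z).Nonempty := ⟨y0, hy0⟩
    set w := (Finset.univ.filter fun z : α => z ≤ v ∧ ¬ Y ≤ z).sup' hS id with hw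
    have hwv : w ≤ v := Finset.sup'_le _ _ fun z hz => by
      simp only [Finset.mem_filter, Finset.mem_univ, true_and] at hz; exact hz.1
    have hYw : ¬ Y ≤ w := by
      have := Finset.sup'_induction hS id
        (p := fun z => ¬ Y ≤ z)
        (fun a ha b hb hYab => by
          rcases hYp.le_sup.1 hYab with h | h
          exacts [ha h, hb h])
        (fun a ha => by
          simp only [Finset.mem_filter, Finset.mem_univ, true_and] at ha
          exact ha.2)
      exact this
    have hmem : ∀ z, z ≤ v → ¬ Y ≤ z → z ≤ w := by
      intro z h1 h2
      have hz : z ∈ Finset.univ.filter fun z : α => z ≤ v ∧ ¬ Y ≤ z := by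
        simp only [Finset.mem_filter, Finset.mem_univ, true_and]
        exact ⟨h1, h2⟩
      exact Finset.le_sup' id hz
    have hkey : ∀ z, z ≤ v → v ≤ z ⊔ w ∨ z ≤ w := by
      intro z hzv
      by_cases hYz : Y ≤ z
      · left
        refine le_of_forall_supIrred_le _ _ fun j hj hjv => ?_
        by_cases hYj : Y ≤ j
        · rcases hYj.lt_or_eq with hlt | heq
          · exact absurd ⟨hlt, lt_of_le_of_lt hjv hvX.lt⟩ (hmid j hj)
          · exact le_sup_left.trans' (heq ▸ hYz)
        · exact (hmem j hjv hYj).trans le_sup_right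
      · exact Or.inr (hmem z hzv hYz)
    have hwltv : w < v := lt_of_le_of_ne hwv fun h => hYw (h ▸ hYv)
    have hwcov : w ⋖ v := by
      refine ⟨hwltv, fun z hwz hzv => ?_⟩
      rcases hkey z hzv.le with h | h
      · exact hzv.not_ge (h.trans (sup_le le_rfl hwz.le))
      · exact hwz.not_ge h
    have hvYw : v = Y ⊔ w := by
      refine le_antisymm ?_ (sup_le hYv hwv)
      rcases hkey Y hYv with h | h
      · exact h
      · exact absurd h hYw
    have hB0 : Y ⊓ w ⋖ Y := by
      refine ⟨inf_lt_left.2 hYw, fun z h1 h2 => ?_⟩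
      have hzw : z ≤ w := by
        refine le_of_forall_supIrred_le _ _ fun j hj hjz => ?_
        have hjv : j ≤ v := hjz.trans (h2.le.trans hYv)
        have hYj : ¬ Y ≤ j := fun h => h2.not_ge (h.trans hjz)
        exact hmem j hjv hYj
      exact h1.not_ge (le_inf h2.le hzw)
    have huniq : ∀ z : α, w < z → z < X → z = v := by
      intro z hwz hzX
      have hzv := hlow z hzX
      rcases hkey z hzv with h | h
      · have : z ⊔ w = z := sup_eq_left.2 hwz.le
        exact le_antisymm hzv (this ▸ h)
      · exact absurd h hwz.not_ge
    exact ⟨v, Y ⊓ w, X, v, w, hvX, hB0, hvX, hwcov, huniq,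
      Relation.EqvGen.refl _,
      Relation.EqvGen.rel _ _ ⟨Y, w, by rw [Prod.mk.injEq]; exact ⟨hvYw, rfl⟩, rfl⟩⟩
  · rintro ⟨A0, B0, u, v, w, hA0, hB0, hvu, hwv, huniq, h1, h2⟩
    have hXuv : X ≤ u ∧ ¬ X ≤ v :=
      (h1.prime_invariant hXp).2 ⟨le_rfl, hA0.lt.not_ge⟩
    have hYvw : Y ≤ v ∧ ¬ Y ≤ w :=
      (h2.prime_invariant hYp).2 ⟨le_rfl, hB0.lt.not_ge⟩
    have hXw : ¬ X ≤ w := fun h => hXuv.2 (h.trans hwv.le)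
    have hsup : w ⊔ X = u := by
      have hle : w ⊔ X ≤ u := sup_le (hwv.le.trans hvu.le) hXuv.1
      rcases hle.lt_or_eq with hlt | heq
      · exact absurd (huniq _ (left_lt_sup.2 hXw) hlt ▸ le_sup_right :
          X ≤ v) hXuv.2
      · exact heq
    have hYX : Y ≤ X := by
      have : Y ≤ w ⊔ X := hsup ▸ (hYvw.1.trans hvu.le)
      exact (hYp.le_sup.1 this).resolve_left hYvw.2
    have hYltX : Y < X := lt_of_le_of_ne hYX fun h => hXuv.2 (h ▸ hYvw.1)
    refine ⟨hYltX, fun Z hZ ⟨hYZ, hZX⟩ => ?_⟩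
    have hZp : SupPrime Z := supPrime_iff_supIrred.2 hZ
    have hZw : ¬ Z ≤ w := fun h => hYvw.2 (hYZ.le.trans h)
    have hZu : Z ≤ u := hZX.le.trans hXuv.1
    have hle : w ⊔ Z ≤ u := sup_le (hwv.le.trans hvu.le) hZu
    rcases hle.lt_or_eq with hlt | heq
    · have hZv : Z ≤ v := huniq _ (left_lt_sup.2 hZw) hlt ▸ le_sup_right
      have : Z ≤ Y ∧ ¬ Z ≤ B0 :=
        (h2.prime_invariant hZp).1 ⟨hZv, fun h => hZw h⟩
      exact hYZ.not_ge this.1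
    · have : X ≤ w ⊔ Z := heq ▸ hXuv.1
      rcases hXp.le_sup.1 this with h | h
      · exact hXw h
      · exact hZX.not_ge h
end

section
/- Let M be a module of finite length over a ring R. If M is indecomposable, then the Ext_Λ graph of M is connected, where Λ is the lattice of submodules of M. -/
variable {R M : Type*} [Ring R] [AddCommGroup M] [Module R M]

/-- The subquotient `U / V` associated to a pair `(U, V)` of submodules with `V ≤ U`. -/
abbrev SubQuot (p : Submodule R M × Submodule R M) :=
  ↥p.1 ⧸ (p.2.comap p.1.subtype)

/-- Two pairs of submodules have isomorphic associated subquotients. -/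
def FactorIso (p q : Submodule R M × Submodule R M) : Prop :=
  Nonempty (SubQuot p ≃ₗ[R] SubQuot q)

/-- There is an Ext arrow from the composition factor of `p` to that of `q`:
submodules `W ≤ V ≤ U` with `U/W` uniserial of length two, `U/V` isomorphic to the
factor of `p` and `V/W` isomorphic to the factor of `q`. -/
def ExtEdge (p q : Submodule R M × Submodule R M) : Prop :=
  ∃ U V W : Submodule R M, W ⋖ V ∧ V ⋖ U ∧ (∀ Z : Submodule R M, W < Z → Z < U → Z = V) ∧
    FactorIso (U, V) p ∧ FactorIso (V, W) q

set_option linter.unusedSectionVars false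

namespace ExtAux

theorem factorIso_refl (p : Submodule R M × Submodule R M) : FactorIso p p :=
  ⟨LinearEquiv.refl _ _⟩

theorem factorIso_symm {p q : Submodule R M × Submodule R M} (h : FactorIso p q) :
    FactorIso q p := ⟨h.some.symm⟩

theorem factorIso_trans {p q r : Submodule R M × Submodule R M} (h : FactorIso p q)
    (h' : FactorIso q r) : FactorIso p r := ⟨h.some.trans h'.some⟩

theorem factorIso_of_sup_inf {x a b t : Submodule R M} (hsup : x ⊔ a = b) (hinf : x ⊓ a = t) :
    FactorIso (b, a) (x, t) := by
  subst hsup; subst hinf; exact ⟨(LinearMap.quotientInfEquivSupQuotient x a).symm⟩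

variable (s : CompositionSeries (Submodule R M))

/-- Composition factor `i` "occurs" in `X`. -/
def jp (i : Fin s.length) (X : Submodule R M) : Prop :=
  ¬ s i.succ ⊓ X ≤ s i.castSucc

/-- The representative pair of the `i`-th composition factor. -/
def F (i : Fin s.length) : Submodule R M × Submodule R M :=
  (s i.succ, s i.castSucc)

theorem step' (i : Fin s.length) : s i.castSucc ⋖ s i.succ := s.step i

theorem jp_mono {i : Fin s.length} {X Y : Submodule R M} (h : jp s i X) (hXY : X ≤ Y) :
    jp s i Y := fun hle => h (le_trans (inf_le_inf_left _ hXY) hle)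

theorem not_jp_bot (i : Fin s.length) : ¬ jp s i ⊥ := fun h => h (by simp)

theorem jp_top (i : Fin s.length) : jp s i ⊤ := by
  simpa [jp] using (step' s i).lt.not_ge

theorem not_jp_iff {i : Fin s.length} {X : Submodule R M} :
    ¬ jp s i X ↔ s i.castSucc ⊓ X = s i.succ ⊓ X := by
  constructor
  · intro h
    have hle : s i.succ ⊓ X ≤ s i.castSucc := not_not.mp h
    exact le_antisymm (inf_le_inf_right _ (step' s i).le) (le_inf hle inf_le_right)
  · intro h
    rw [jp, not_not, ← h]
    exact inf_le_left

theorem jp_lt {i : Fin s.length} {X : Submodule R M} (h : jp s i X) :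
    s i.castSucc ⊓ X < s i.succ ⊓ X :=
  lt_of_le_of_ne (inf_le_inf_right _ (step' s i).le)
    (fun he => (not_jp_iff s).mpr he h)

theorem inf_castSucc_inf {i : Fin s.length} (X : Submodule R M) :
    s i.castSucc ⊓ (s i.succ ⊓ X) = s i.castSucc ⊓ X := by
  rw [← inf_assoc, inf_of_le_left (step' s i).le]

theorem jp_covBy {i : Fin s.length} {X : Submodule R M} (h : jp s i X) :
    (s i.castSucc ⊓ X) ⋖ (s i.succ ⊓ X) := by
  have hsup : s i.castSucc ⊔ (s i.succ ⊓ X) = s i.succ := by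
    rcases ((step' s i).wcovBy.eq_or_eq le_sup_left
      (sup_le (step' s i).le inf_le_left)) with h1 | h1
    · exact absurd (le_trans le_sup_right h1.le) h
    · exact h1
  have h2 : s i.castSucc ⋖ s i.castSucc ⊔ (s i.succ ⊓ X) := by rw [hsup]; exact step' s i
  have h3 := inf_covBy_of_covBy_sup_left h2
  rwa [inf_castSucc_inf] at h3

/-- The factor of the pair `(s i.succ ⊓ X, s i.castSucc ⊓ X)` is the `i`-th factor. -/
theorem factorIso_jp {i : Fin s.length} {X : Submodule R M} (h : jp s i X) :
    FactorIso (F s i) (s i.succ ⊓ X, s i.castSucc ⊓ X) := by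
  have hsup : (s i.succ ⊓ X) ⊔ s i.castSucc = s i.succ := by
    rcases ((step' s i).wcovBy.eq_or_eq le_sup_right
      (sup_le inf_le_left (step' s i).le)) with h1 | h1
    · exact absurd (le_trans le_sup_left h1.le) h
    · exact h1
  have hinf : (s i.succ ⊓ X) ⊓ s i.castSucc = s i.castSucc ⊓ X := by
    rw [inf_comm, inf_castSucc_inf]
  exact factorIso_of_sup_inf hsup hinf


theorem eq_of_jp_iff (h0 : s.head = ⊥) (h1 : s.last = ⊤) {X Y : Submodule R M}
    (hXY : X ≤ Y) (hiff : ∀ i, jp s i X ↔ jp s i Y) : X = Y := by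
  have key : ∀ t : Fin (s.length + 1), s t ⊓ X = s t ⊓ Y := by
    intro t
    induction t using Fin.induction with
    | zero =>
      have hz : s (0 : Fin (s.length + 1)) = ⊥ := h0
      rw [hz]; simp
    | succ i ih =>
      by_cases h : jp s i Y
      · have hX : jp s i X := (hiff i).mpr h
        have c1 := jp_covBy s hX
        have c2 := jp_covBy s h
        rw [ih] at c1
        rcases c2.wcovBy.eq_or_eq c1.le (inf_le_inf_left _ hXY) with he | he
        · exact absurd he.symm c1.lt.ne
        · exact he
      · have hX' : ¬ jp s i X := fun hx => h ((hiff i).mp hx)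
        rw [← (not_jp_iff s).mp hX', ← (not_jp_iff s).mp h, ih]
  have hl := key (Fin.last s.length)
  have ht : s (Fin.last s.length) = ⊤ := h1
  rw [ht, top_inf_eq, top_inf_eq] at hl
  exact hl

theorem eq_bot_of_not_jp (h0 : s.head = ⊥) (h1 : s.last = ⊤) {X : Submodule R M}
    (h : ∀ i, ¬ jp s i X) : X = ⊥ :=
  (eq_of_jp_iff s h0 h1 bot_le (fun i => iff_of_false (not_jp_bot s i) (h i))).symm

theorem eq_top_of_jp (h0 : s.head = ⊥) (h1 : s.last = ⊤) {X : Submodule R M}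
    (h : ∀ i, jp s i X) : X = ⊤ :=
  eq_of_jp_iff s h0 h1 le_top (fun i => iff_of_true (h i) (jp_top s i))

/-- Key lemma: crossing a covering `a ⋖ b` creates exactly one new jump, whose
factor is isomorphic to `b/a`. -/
theorem covBy_jump (h0 : s.head = ⊥) (h1 : s.last = ⊤) {a b : Submodule R M} (hab : a ⋖ b) :
    ∃ i : Fin s.length, jp s i b ∧ ¬ jp s i a ∧ (∀ i', jp s i' b → i' ≠ i → jp s i' a) ∧
      FactorIso (b, a) (F s i) := by
  classical
  set d : Fin (s.length + 1) → Submodule R M := fun t => a ⊔ (s t ⊓ b) with hd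
  have hdmem : ∀ t, d t = a ∨ d t = b := fun t =>
    hab.wcovBy.eq_or_eq le_sup_left (sup_le hab.le inf_le_right)
  have hdmono : Monotone d := fun t t' htt' =>
    sup_le_sup_left (inf_le_inf_right _ (s.strictMono.monotone htt')) _
  have hs0 : s (0 : Fin (s.length + 1)) = ⊥ := h0
  have hsl : s (Fin.last s.length) = ⊤ := h1
  have hd0 : d 0 = a := by simp [hd, hs0]
  have hdl : d (Fin.last _) = b := by
    simp [hd, hsl, sup_eq_right.mpr hab.le]
  have hne : (Finset.univ.filter (fun t => d t = b)).Nonempty :=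
    ⟨Fin.last _, by simp [hdl]⟩
  set m := (Finset.univ.filter (fun t => d t = b)).min' hne with hm
  have hmb : d m = b := by
    have := Finset.min'_mem _ hne
    simpa using this
  have hm0 : m ≠ 0 := by
    intro h
    rw [h, hd0] at hmb
    exact hab.lt.ne hmb
  obtain ⟨i, hi⟩ := Fin.exists_succ_eq_of_ne_zero hm0
  have hsuccb : d i.succ = b := by rw [hi]; exact hmb
  have hcast : d i.castSucc = a := by
    rcases hdmem i.castSucc with h | h
    · exact h
    · exfalso
      have hle : m ≤ i.castSucc := Finset.min'_le _ _ (by simp [h])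
      have : i.castSucc < m := by rw [← hi]; exact Fin.castSucc_lt_succ (i := i)
      exact absurd (hle.trans_lt this) (lt_irrefl _)
  -- `b` jumps at `i`
  have hjb : jp s i b := by
    intro hle
    have h2 : s i.succ ⊓ b ≤ s i.castSucc ⊓ b := le_inf hle inf_le_right
    have h3 : d i.succ ≤ d i.castSucc := sup_le_sup_left h2 a
    rw [hsuccb, hcast] at h3
    exact hab.lt.not_ge h3
  -- the key equality `s i.castSucc ⊓ b = s i.succ ⊓ a`
  have hya : s i.castSucc ⊓ b ≤ a := sup_eq_left.mp hcast
  have hyz : s i.castSucc ⊓ b ≤ s i.succ ⊓ a :=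
    le_inf (inf_le_left.trans (step' s i).le) hya
  have hzx : s i.succ ⊓ a ≤ s i.succ ⊓ b := inf_le_inf_left _ hab.le
  have hzne : s i.succ ⊓ a ≠ s i.succ ⊓ b := by
    intro h
    have hxa : s i.succ ⊓ b ≤ a := h ▸ inf_le_right
    have : d i.succ = a := by
      rw [hd]
      exact sup_eq_left.mpr hxa
    rw [hsuccb] at this
    exact hab.lt.ne' this
  have hkey : s i.succ ⊓ a = s i.castSucc ⊓ b := by
    rcases (jp_covBy s hjb).wcovBy.eq_or_eq hyz hzx with h | h
    · exact h
    · exact absurd h hzne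
  have hnja : ¬ jp s i a := fun hja => hja (hkey.le.trans inf_le_left)
  refine ⟨i, hjb, hnja, ?_, ?_⟩
  · -- uniqueness
    intro i' hjb' hne'
    by_contra hnja'
    have heqa : s i'.castSucc ⊓ a = s i'.succ ⊓ a := (not_jp_iff s).mp hnja'
    have hba : b ⊓ a = a := inf_eq_right.mpr hab.le
    have hxa' : s i'.succ ⊓ b ⊓ a = s i'.castSucc ⊓ b ⊓ a := by
      rw [inf_assoc, hba, inf_assoc, hba]
      exact heqa.symm
    rcases hdmem i'.succ with hds | hds
    · -- s i'.succ ⊓ b ≤ a, so the two agree, contradicting the jump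
      have hle : s i'.succ ⊓ b ≤ a := sup_eq_left.mp hds
      have : s i'.succ ⊓ b ≤ s i'.castSucc ⊓ b := by
        have h4 : s i'.succ ⊓ b = s i'.succ ⊓ b ⊓ a := (inf_eq_left.mpr hle).symm
        rw [h4, hxa']
        exact inf_le_left
      exact (jp_lt s hjb').not_ge this
    · rcases hdmem i'.castSucc with hdc | hdc
      · -- two jumps of `d`: impossible
        exfalso
        rcases lt_trichotomy i i' with hii | hii | hii
        · have hle : i.succ ≤ i'.castSucc := by
            rw [Fin.succ_le_castSucc_iff]; exact hii
          have := hdmono hle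
          rw [hsuccb, hdc] at this
          exact hab.lt.not_ge this
        · exact hne' (hii.symm ▸ rfl)
        · have hle : i'.succ ≤ i.castSucc := by
            rw [Fin.succ_le_castSucc_iff]; exact hii
          have := hdmono hle
          rw [hds, hcast] at this
          exact hab.lt.not_ge this
      · -- modular cancellation: the two infs are equal, contradicting the jump
        exfalso
        have hXb : s i'.succ ⊓ b ≤ a ⊔ (s i'.castSucc ⊓ b) := by
          have h5 : a ⊔ (s i'.castSucc ⊓ b) = b := hdc
          rw [h5]; exact inf_le_right
        have hmod : ((s i'.castSucc ⊓ b) ⊔ a) ⊓ (s i'.succ ⊓ b) =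
            (s i'.castSucc ⊓ b) ⊔ (a ⊓ (s i'.succ ⊓ b)) :=
          sup_inf_assoc_of_le _ (le_inf (inf_le_left.trans (step' s i').le) inf_le_right)
        have hl1 : ((s i'.castSucc ⊓ b) ⊔ a) ⊓ (s i'.succ ⊓ b) = s i'.succ ⊓ b := by
          rw [sup_comm]
          exact inf_eq_right.mpr hXb
        have hl2 : a ⊓ (s i'.succ ⊓ b) ≤ s i'.castSucc ⊓ b := by
          rw [inf_comm a]
          exact hxa'.le.trans inf_le_left
        rw [hl1, sup_eq_left.mpr hl2] at hmod
        exact (jp_lt s hjb').ne hmod.symm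
  · -- the factor isomorphism
    have hsup : (s i.succ ⊓ b) ⊔ a = b := by
      rw [sup_comm]
      rw [hd] at hsuccb
      exact hsuccb
    have hinf : (s i.succ ⊓ b) ⊓ a = s i.castSucc ⊓ b := by
      rw [inf_assoc, inf_eq_right.mpr hab.le, hkey]
    exact factorIso_trans (factorIso_of_sup_inf hsup hinf) (factorIso_symm (factorIso_jp s hjb))


/-- Transfer a covering along `⊔ X`, with the factor isomorphism. -/
theorem sup_covBy {a b : Submodule R M} (hab : a ⋖ b) (X : Submodule R M) :
    X ⊔ a = X ⊔ b ∨ ((X ⊔ a) ⋖ (X ⊔ b) ∧ FactorIso (X ⊔ b, X ⊔ a) (b, a)) := by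
  rcases hab.wcovBy.eq_or_eq (c := b ⊓ (X ⊔ a)) (le_inf hab.le le_sup_right) inf_le_left
    with hc | hc
  · right
    have hne : X ⊔ a ≠ X ⊔ b := by
      intro h
      have hble : b ≤ X ⊔ a := h ▸ le_sup_right
      rw [inf_eq_left.mpr hble] at hc
      exact hab.lt.ne' hc
    refine ⟨⟨lt_of_le_of_ne (sup_le_sup_left hab.le X) hne, ?_⟩, ?_⟩
    · intro Z h1 h2
      have hXZ : X ≤ Z := le_trans le_sup_left h1.le
      have hZ : Z = X ⊔ (b ⊓ Z) := by
        have h3 := sup_inf_assoc_of_le (x := X) b hXZ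
        rw [inf_eq_right.mpr h2.le] at h3
        exact h3
      have haZ : a ≤ b ⊓ Z := le_inf hab.le (le_trans le_sup_right h1.le)
      rcases hab.wcovBy.eq_or_eq haZ inf_le_left with h3 | h3
      · rw [h3] at hZ
        exact h1.ne' hZ
      · have hbZ : b ≤ Z := h3 ▸ inf_le_right
        exact h2.not_ge (sup_le hXZ hbZ)
    · have hsup : b ⊔ (X ⊔ a) = X ⊔ b := by
        rw [sup_comm b, sup_assoc, sup_eq_right.mpr hab.le]
      exact factorIso_of_sup_inf hsup hc
  · left
    exact le_antisymm (sup_le_sup_left hab.le X) (sup_le le_sup_left (inf_eq_left.mp hc))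

/-- Transfer a covering along `⊓ X`, with the factor isomorphism. -/
theorem inf_covBy {a b : Submodule R M} (hab : a ⋖ b) (X : Submodule R M) :
    X ⊓ a = X ⊓ b ∨ ((X ⊓ a) ⋖ (X ⊓ b) ∧ FactorIso (b, a) (X ⊓ b, X ⊓ a)) := by
  rcases hab.wcovBy.eq_or_eq (c := a ⊔ (X ⊓ b)) le_sup_left
    (sup_le hab.le inf_le_right) with hc | hc
  · left
    exact le_antisymm (inf_le_inf_left X hab.le) (le_inf inf_le_left (sup_eq_left.mp hc))
  · right
    have hne : X ⊓ a ≠ X ⊓ b := by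
      intro h
      have h4 : a ⊔ (X ⊓ b) = a := by
        rw [← h]
        exact sup_eq_left.mpr inf_le_right
      rw [hc] at h4
      exact hab.lt.ne' h4
    refine ⟨⟨lt_of_le_of_ne (inf_le_inf_left X hab.le) hne, ?_⟩, ?_⟩
    · intro Z h1 h2
      have hZX : Z ≤ X := h2.le.trans inf_le_left
      have hZ : Z = X ⊓ (a ⊔ Z) := by
        have h3 := inf_sup_assoc_of_le (x := X) a hZX
        rw [sup_eq_right.mpr h1.le] at h3
        exact h3
      rcases hab.wcovBy.eq_or_eq (c := a ⊔ Z) le_sup_left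
        (sup_le hab.le (h2.le.trans inf_le_right)) with h3 | h3
      · rw [h3] at hZ
        exact h1.ne' hZ
      · rw [h3] at hZ
        exact h2.ne hZ
    · have hsup : (X ⊓ b) ⊔ a = b := by rw [sup_comm]; exact hc
      have hinf : (X ⊓ b) ⊓ a = X ⊓ a := by rw [inf_assoc, inf_eq_right.mpr hab.le]
      exact factorIso_of_sup_inf hsup hinf


/-- Union bound: a jump of `X ⊔ Y` is a jump of `X` or of `Y`. Uses multiplicity-freeness. -/
theorem jp_sup [IsNoetherian R M] [IsArtinian R M] (h0 : s.head = ⊥) (h1 : s.last = ⊤)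
    (hinj : ∀ i j : Fin s.length, FactorIso (F s i) (F s j) → i = j)
    (Y : Submodule R M) :
    ∀ X : Submodule R M, ∀ i, jp s i (X ⊔ Y) → jp s i X ∨ jp s i Y := by
  induction Y using WellFoundedLT.induction with
  | _ Y IH =>
    intro X i hjp
    rcases eq_or_ne Y ⊥ with rfl | hYbot
    · rw [sup_bot_eq] at hjp
      exact Or.inl hjp
    obtain ⟨Z, -, hZY⟩ := exists_le_covBy_of_lt (bot_lt_iff_ne_bot.mpr hYbot)
    rcases sup_covBy hZY X with heq | ⟨hcov, hiso⟩
    · rw [← heq] at hjp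
      rcases IH Z hZY.lt X i hjp with h | h
      · exact Or.inl h
      · exact Or.inr (jp_mono s h hZY.le)
    · by_cases hjXZ : jp s i (X ⊔ Z)
      · rcases IH Z hZY.lt X i hjXZ with h | h
        · exact Or.inl h
        · exact Or.inr (jp_mono s h hZY.le)
      · obtain ⟨j, hjj, hnj, huniq, hisoj⟩ := covBy_jump s h0 h1 hcov
        have hij : i = j := by
          by_contra hne
          exact hjXZ (huniq i hjp hne)
        obtain ⟨k, hjk, -, -, hisok⟩ := covBy_jump s h0 h1 hZY
        have hjk' : j = k :=
          hinj j k (factorIso_trans (factorIso_trans (factorIso_symm hisoj) hiso) hisok)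
        rw [hij, hjk']
        exact Or.inr hjk

/-- Intersection bound: a common jump of `X` and `Y` is a jump of `X ⊓ Y`. -/
theorem jp_inf [IsNoetherian R M] [IsArtinian R M] (h0 : s.head = ⊥) (h1 : s.last = ⊤)
    (hinj : ∀ i j : Fin s.length, FactorIso (F s i) (F s j) → i = j)
    (Y : Submodule R M) :
    ∀ X : Submodule R M, ∀ i, jp s i X → jp s i Y → jp s i (X ⊓ Y) := by
  induction Y using WellFoundedLT.induction with
  | _ Y IH =>
    intro X i hX hY
    rcases eq_or_ne Y ⊥ with rfl | hYbot
    · exact absurd hY (not_jp_bot s i)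
    obtain ⟨Z, -, hZY⟩ := exists_le_covBy_of_lt (bot_lt_iff_ne_bot.mpr hYbot)
    by_cases hZ : jp s i Z
    · exact jp_mono s (IH Z hZY.lt X i hX hZ) (inf_le_inf_left X hZY.le)
    · obtain ⟨j, hjY, hnjZ, huniq, hisoYZ⟩ := covBy_jump s h0 h1 hZY
      have hij : i = j := by
        by_contra hne
        exact hZ (huniq i hY hne)
      rcases inf_covBy hZY X with heq | ⟨hcov3, hiso3⟩
      · exfalso
        rcases sup_covBy hZY X with heq2 | ⟨hcov2, hiso2⟩
        · -- modular cancellation gives Y = Z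
          have h5 := sup_inf_assoc_of_le (x := Z) X hZY.le
          rw [sup_comm Z X, heq2, inf_eq_right.mpr (le_sup_right : Y ≤ X ⊔ Y), ← heq,
            sup_eq_left.mpr (inf_le_right : X ⊓ Z ≤ Z)] at h5
          exact hZY.lt.ne' h5
        · obtain ⟨m, hjm, hnm, -, hisom⟩ := covBy_jump s h0 h1 hcov2
          have hmj : m = j :=
            hinj m j (factorIso_trans (factorIso_trans (factorIso_symm hisom) hiso2) hisoYZ)
          have : jp s m (X ⊔ Z) := by
            rw [hmj, ← hij]
            exact jp_mono s hX le_sup_left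
          exact hnm this
      · obtain ⟨m, hjm, -, -, hisom⟩ := covBy_jump s h0 h1 hcov3
        have hmj : j = m :=
          hinj j m (factorIso_trans (factorIso_trans (factorIso_symm hisoYZ) hiso3)
            (factorIso_symm (factorIso_symm hisom)))
        rw [hij, hmj]
        exact hjm


section Main

variable [IsNoetherian R M] [IsArtinian R M]

/-- A minimal submodule in which factor `i` occurs. -/
noncomputable def J (i : Fin s.length) : Submodule R M :=
  (wellFounded_lt (α := Submodule R M)).min {X | jp s i X} ⟨⊤, jp_top s i⟩

theorem jp_J (i : Fin s.length) : jp s i (J s i) :=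
  (wellFounded_lt (α := Submodule R M)).min_mem {X | jp s i X} ⟨⊤, jp_top s i⟩

theorem J_not_lt {i : Fin s.length} {X : Submodule R M} (h : jp s i X) : ¬ X < J s i :=
  (wellFounded_lt (α := Submodule R M)).not_lt_min {X | jp s i X} h

theorem J_ne_bot (i : Fin s.length) : J s i ≠ ⊥ := fun h =>
  not_jp_bot s i (h ▸ jp_J s i)

/-- The symmetric step relation of the Ext graph. -/
def grel : (Submodule R M × Submodule R M) → (Submodule R M × Submodule R M) → Prop :=
  fun a b => ExtEdge a b ∨ ExtEdge b a ∨ FactorIso a b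

theorem grel_symm : Symmetric (grel (R := R) (M := M)) := by
  rintro a b (h | h | h)
  · exact Or.inr (Or.inl h)
  · exact Or.inl h
  · exact Or.inr (Or.inr (factorIso_symm h))

theorem rtg_symm {a b : Submodule R M × Submodule R M}
    (h : Relation.ReflTransGen grel a b) : Relation.ReflTransGen grel b a :=
  by
    induction h with
    | refl => exact Relation.ReflTransGen.refl
    | tail _ hbc ih => exact Relation.ReflTransGen.head (grel_symm hbc) ih

variable (h0 : s.head = ⊥) (h1 : s.last = ⊤)
  (hinj : ∀ i j : Fin s.length, FactorIso (F s i) (F s j) → i = j)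

include h0 h1 hinj

theorem J_le {i : Fin s.length} {X : Submodule R M} (h : jp s i X) : J s i ≤ X := by
  have h2 : jp s i (J s i ⊓ X) := jp_inf s h0 h1 hinj X (J s i) i (jp_J s i) h
  have h3 : J s i ⊓ X = J s i :=
    ((inf_le_left : J s i ⊓ X ≤ J s i).lt_or_eq.resolve_left (J_not_lt s h2))
  rw [← h3]
  exact inf_le_right

/-- `J i` has a unique coatom, whose quotient is the `i`-th factor. -/
theorem J_coatom (i : Fin s.length) :
    ∃ V, V ⋖ J s i ∧ (∀ Z, Z < J s i → Z ≤ V) ∧ ¬ jp s i V ∧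
      (∀ m, jp s m (J s i) → m ≠ i → jp s m V) ∧ FactorIso (J s i, V) (F s i) := by
  obtain ⟨V, -, hV⟩ :=
    exists_le_covBy_of_lt (bot_lt_iff_ne_bot.mpr (J_ne_bot s i))
  have huniq : ∀ Z, Z < J s i → Z ≤ V := by
    intro Z hZ
    obtain ⟨V', hZV', hV'⟩ := exists_le_covBy_of_lt hZ
    have hVV' : V' = V := by
      by_contra hne
      have hnotle : ¬ V' ≤ V := by
        intro hle
        rcases hle.lt_or_eq with hlt | heq
        · exact hV'.2 hlt hV.lt
        · exact hne heq
      have hsup : V ⊔ V' = J s i := by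
        rcases hV.wcovBy.eq_or_eq (le_sup_left : V ≤ V ⊔ V')
          (sup_le hV.le hV'.le) with h | h
        · exact absurd (sup_eq_left.mp h) hnotle
        · exact h
      have hjpsup : jp s i (V ⊔ V') := by rw [hsup]; exact jp_J s i
      rcases jp_sup s h0 h1 hinj V' V i hjpsup with h | h
      · exact hV.lt.not_ge (J_le s h0 h1 hinj h)
      · exact hV'.lt.not_ge (J_le s h0 h1 hinj h)
    rw [← hVV']
    exact hZV'
  obtain ⟨c, hjc, hnjc, huc, hisoc⟩ := covBy_jump s h0 h1 hV
  have hci : c = i := by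
    by_contra hne
    have : jp s i V := huc i (jp_J s i) (fun h => hne h.symm)
    exact hV.lt.not_ge (J_le s h0 h1 hinj this)
  subst hci
  exact ⟨V, hV, huniq, hnjc, huc, hisoc⟩


theorem jp_finset_sup {β : Type*} (t : Finset β) (f : β → Submodule R M)
    {x : Fin s.length} (hx : jp s x (t.sup f)) : ∃ m ∈ t, jp s x (f m) := by
  classical
  induction t using Finset.induction with
  | empty =>
    rw [Finset.sup_empty] at hx
    exact absurd hx (not_jp_bot s x)
  | @insert a t hnotmem ih =>
    rw [Finset.sup_insert] at hx
    rcases jp_sup s h0 h1 hinj (t.sup f) (f a) x hx with h | h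
    · exact ⟨a, Finset.mem_insert_self a t, h⟩
    · obtain ⟨m, hm, hm'⟩ := ih h
      exact ⟨m, Finset.mem_insert_of_mem hm, hm'⟩

theorem J_inj {k m : Fin s.length} (h : J s k = J s m) : k = m := by
  by_contra hne
  obtain ⟨Vm, hVm, -, -, hother, -⟩ := J_coatom s h0 h1 hinj m
  have h2 : jp s k (J s m) := h ▸ jp_J s k
  have h3 : jp s k Vm := hother k h2 hne
  have h4 : J s k ≤ Vm := J_le s h0 h1 hinj h3
  rw [h] at h4
  exact hVm.lt.not_ge h4

omit h0 h1 hinj in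
/-- Produce an `Ext` edge out of the top of `J i`. -/
theorem edge_of_coatom {i k : Fin s.length} {V W : Submodule R M} (hV : V ⋖ J s i)
    (hVuniq : ∀ Z, Z < J s i → Z ≤ V) (hisoV : FactorIso (J s i, V) (F s i))
    (hW : W ⋖ V) (hisoW : FactorIso (V, W) (F s k)) :
    ExtEdge (F s i) (F s k) := by
  refine ⟨J s i, V, W, hW, hV, ?_, hisoV, hisoW⟩
  intro Z h1 h2
  exact (hW.wcovBy.eq_or_eq h1.le (hVuniq Z h2)).resolve_left (fun h => h1.ne' h)

/-- Everything occurring in `J i` is connected to `i` in the Ext graph. -/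
theorem connect : ∀ A : Submodule R M, ∀ i : Fin s.length, A = J s i →
    ∀ j, jp s j A → Relation.ReflTransGen grel (F s j) (F s i) := by
  intro A
  induction A using WellFoundedLT.induction with
  | _ A IH =>
  rintro i rfl j hj
  rcases eq_or_ne j i with rfl | hne
  · exact Relation.ReflTransGen.refl
  classical
  obtain ⟨V, hV, hVuniq, hnjpi, hjpother, hisoV⟩ := J_coatom s h0 h1 hinj i
  have hjV : jp s j V := hjpother j hj hne
  -- pick `k ∈ S(V)` with `j ≼ k` and `J k` maximal
  set T : Set (Fin s.length) := {m | jp s m V ∧ jp s j (J s m)} with hT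
  have hjT : j ∈ T := ⟨hjV, jp_J s j⟩
  obtain ⟨k, hkT, hkmax⟩ := Set.Finite.exists_maximalFor (J s) T (Set.toFinite T) ⟨j, hjT⟩
  obtain ⟨hkV, hkj⟩ := hkT
  have hJkV : J s k ≤ V := J_le s h0 h1 hinj hkV
  -- the complementary coatom of `V`
  set Tk : Finset (Fin s.length) := Finset.univ.filter (fun m => jp s m V ∧ m ≠ k) with hTk
  set W : Submodule R M := Tk.sup (J s) with hW
  have hWle : W ≤ V := Finset.sup_le (fun m hm => by
    rw [hTk] at hm
    exact J_le s h0 h1 hinj (Finset.mem_filter.mp hm).2.1)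
  have hjpW : ∀ x, jp s x W ↔ (jp s x V ∧ x ≠ k) := by
    intro x
    constructor
    · intro hx
      obtain ⟨m, hm, hxm⟩ := jp_finset_sup s h0 h1 hinj Tk (J s) hx
      obtain ⟨hmV, hmk⟩ := (Finset.mem_filter.mp hm).2
      have hxle : J s x ≤ J s m := J_le s h0 h1 hinj hxm
      have hmle : J s m ≤ V := J_le s h0 h1 hinj hmV
      refine ⟨jp_mono s (jp_J s x) (hxle.trans hmle), ?_⟩
      rintro rfl
      have hlt : J s x < J s m := lt_of_le_of_ne hxle
        (fun h => hmk (J_inj s h0 h1 hinj h.symm))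
      have hmT : m ∈ T := ⟨hmV, jp_mono s hkj hxle⟩
      exact hlt.not_ge (hkmax hmT hxle)
    · rintro ⟨hxV, hxk⟩
      have hmem : x ∈ Tk := by
        rw [hTk]
        exact Finset.mem_filter.mpr ⟨Finset.mem_univ x, hxV, hxk⟩
      exact jp_mono s (jp_J s x) (Finset.le_sup (f := J s) hmem)
  have hWlt : W < V := lt_of_le_of_ne hWle (fun h => ((hjpW k).mp (by rw [h]; exact hkV)).2 rfl)
  have hWcov : W ⋖ V := by
    refine ⟨hWlt, ?_⟩
    intro Z hZ1 hZ2
    have hx : ∃ x, jp s x Z ∧ ¬ jp s x W := by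
      by_contra hno
      push_neg at hno
      exact hZ1.ne (eq_of_jp_iff s h0 h1 hZ1.le
        (fun x => ⟨fun hW' => jp_mono s hW' hZ1.le, hno x⟩))
    obtain ⟨x, hxZ, hxW⟩ := hx
    have hxV : jp s x V := jp_mono s hxZ hZ2.le
    have hxk : x = k := by
      by_contra hne'
      exact hxW ((hjpW x).mpr ⟨hxV, hne'⟩)
    have hkZ : jp s k Z := hxk ▸ hxZ
    have hy : ∃ y, jp s y V ∧ ¬ jp s y Z := by
      by_contra hno
      push_neg at hno
      exact hZ2.ne (eq_of_jp_iff s h0 h1 hZ2.le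
        (fun y => ⟨fun hZ' => jp_mono s hZ' hZ2.le, hno y⟩))
    obtain ⟨y, hyV, hyZ⟩ := hy
    have hyk : y ≠ k := fun h => hyZ (h ▸ hkZ)
    exact hyZ (jp_mono s ((hjpW y).mpr ⟨hyV, hyk⟩) hZ1.le)
  obtain ⟨c, hcV, hcW, hcu, hisoc⟩ := covBy_jump s h0 h1 hWcov
  have hck : c = k := by
    by_contra hne'
    exact hcW ((hjpW c).mpr ⟨hcV, hne'⟩)
  have hisok : FactorIso (V, W) (F s k) := hck ▸ hisoc
  have hedge : ExtEdge (F s i) (F s k) := edge_of_coatom s hV hVuniq hisoV hWcov hisok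
  have step1 : Relation.ReflTransGen grel (F s k) (F s i) :=
    Relation.ReflTransGen.single (Or.inr (Or.inl hedge))
  rcases eq_or_ne j k with rfl | hjk
  · exact step1
  · have hlt : J s k < J s i := hJkV.trans_lt hV.lt
    exact Relation.ReflTransGen.trans (IH (J s k) hlt k rfl j hkj) step1

/-- Totality: every factor is connected to a fixed one. -/
theorem total (hind : ∀ A B : Submodule R M, IsCompl A B → A = ⊥ ∨ B = ⊥)
    (i0 : Fin s.length) : ∀ j, Relation.ReflTransGen grel (F s j) (F s i0) := by
  classical
  set A : Fin s.length → Prop := fun m => Relation.ReflTransGen grel (F s m) (F s i0) with hA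
  set NA : Submodule R M := (Finset.univ.filter A).sup (J s) with hNA
  set NB : Submodule R M := (Finset.univ.filter (fun m => ¬ A m)).sup (J s) with hNB
  have hmemA : ∀ m, A m → J s m ≤ NA := fun m hm =>
    Finset.le_sup (Finset.mem_filter.mpr ⟨Finset.mem_univ m, hm⟩)
  have hmemB : ∀ m, ¬ A m → J s m ≤ NB := fun m hm =>
    Finset.le_sup (Finset.mem_filter.mpr ⟨Finset.mem_univ m, hm⟩)
  have htop : NA ⊔ NB = ⊤ := by
    apply eq_top_of_jp s h0 h1
    intro x
    by_cases hx : A x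
    · exact jp_mono s (jp_J s x) ((hmemA x hx).trans le_sup_left)
    · exact jp_mono s (jp_J s x) ((hmemB x hx).trans le_sup_right)
  have hbot : NA ⊓ NB = ⊥ := by
    apply eq_bot_of_not_jp s h0 h1
    intro x hx
    have hxA : jp s x NA := jp_mono s hx inf_le_left
    have hxB : jp s x NB := jp_mono s hx inf_le_right
    obtain ⟨m, hm, hxm⟩ := jp_finset_sup s h0 h1 hinj _ (J s) hxA
    have hmA : A m := (Finset.mem_filter.mp hm).2
    have hxA' : A x := Relation.ReflTransGen.trans
      (connect s h0 h1 hinj (J s m) m rfl x hxm) hmA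
    obtain ⟨m', hm', hxm'⟩ := jp_finset_sup s h0 h1 hinj _ (J s) hxB
    have hmB : ¬ A m' := (Finset.mem_filter.mp hm').2
    exact hmB (Relation.ReflTransGen.trans
      (rtg_symm (connect s h0 h1 hinj (J s m') m' rfl x hxm')) hxA')
  rcases hind NA NB ⟨disjoint_iff.mpr hbot, codisjoint_iff.mpr htop⟩ with hNAbot | hNBbot
  · exfalso
    have : J s i0 ≤ NA := hmemA i0 Relation.ReflTransGen.refl
    rw [hNAbot, le_bot_iff] at this
    exact J_ne_bot s i0 this
  · intro j
    by_contra hj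
    have : J s j ≤ NB := hmemB j hj
    rw [hNBbot, le_bot_iff] at this
    exact J_ne_bot s j this

end Main

end ExtAux


/-- If `M` is an indecomposable multiplicity-free module of finite length, then the
`Ext_Λ` graph of `M` is connected: any two composition factors (represented by covering
pairs of submodules) are linked by a chain of Ext arrows (in either direction), where
isomorphic factors represent the same vertex. -/
theorem extGraph_connected_of_indecomposable
    (hfl : IsFiniteLength R M)
    (hmf : ∃ s : CompositionSeries (Submodule R M), s.head = ⊥ ∧ s.last = ⊤ ∧
      ∀ i j : Fin s.length,
        FactorIso (s i.succ, s i.castSucc) (s j.succ, s j.castSucc) → i = j)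
    (hind : ∀ A B : Submodule R M, IsCompl A B → A = ⊥ ∨ B = ⊥) :
    ∀ p q : Submodule R M × Submodule R M, p.2 ⋖ p.1 → q.2 ⋖ q.1 →
      Relation.ReflTransGen
        (fun a b => ExtEdge a b ∨ ExtEdge b a ∨ FactorIso a b) p q := by
  obtain ⟨s, h0, h1, hinj'⟩ := hmf
  have hinj : ∀ i j : Fin s.length,
      FactorIso (ExtAux.F s i) (ExtAux.F s j) → i = j := hinj'
  obtain ⟨hN, hA⟩ := isFiniteLength_iff_isNoetherian_isArtinian.mp hfl
  intro p q hp hq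
  obtain ⟨ip, -, -, -, hisop⟩ := ExtAux.covBy_jump s h0 h1 hp
  obtain ⟨iq, -, -, -, hisoq⟩ := ExtAux.covBy_jump s h0 h1 hq
  have hchain : Relation.ReflTransGen (ExtAux.grel (R := R) (M := M))
      (ExtAux.F s ip) (ExtAux.F s iq) :=
    Relation.ReflTransGen.trans (ExtAux.total s h0 h1 hinj hind iq ip)
      Relation.ReflTransGen.refl
  have hstep1 : Relation.ReflTransGen (ExtAux.grel (R := R) (M := M)) p (ExtAux.F s ip) :=
    Relation.ReflTransGen.single (Or.inr (Or.inr hisop))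
  have hstep2 : Relation.ReflTransGen (ExtAux.grel (R := R) (M := M)) (ExtAux.F s iq) q :=
    Relation.ReflTransGen.single (Or.inr (Or.inr (ExtAux.factorIso_symm hisoq)))
  exact Relation.ReflTransGen.trans hstep1 (Relation.ReflTransGen.trans hchain hstep2)
end

section
/- In a finite multiplicity-free modular lattice Λ, no sublattice is isomorphic to M₃. -/
variable {α : Type*}

/-- A lattice contains a sublattice isomorphic to the diamond `M₃`: three pairwise
incomparable elements with pairwise equal meets and pairwise equal joins. -/
def HasM3 (α : Type*) [Lattice α] : Prop :=
  ∃ a b c : α,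
    a ⊓ b = b ⊓ c ∧ b ⊓ c = a ⊓ c ∧ a ⊔ b = b ⊔ c ∧ b ⊔ c = a ⊔ c ∧
    ¬a ≤ b ∧ ¬b ≤ a ∧ ¬b ≤ c ∧ ¬c ≤ b ∧ ¬a ≤ c ∧ ¬c ≤ a

/-- A finite multiplicity-free modular lattice has no sublattice isomorphic to `M₃`. -/
theorem no_M3_of_multFree [Lattice α] [Fintype α] [IsModularLattice α]
    (hmf : MultFree α) : ¬HasM3 α := by
  rintro ⟨a, b, c, him1, him2, hjm1, hjm2, nab, nba, nbc, ncb, nac, nca⟩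
  set m := a ⊓ b with hm
  set j := a ⊔ b with hj
  have hmb : m ≤ b := inf_le_right
  have hmc : m ≤ c := him1.le.trans inf_le_right
  have haj : a ≤ j := le_sup_left
  have hbj : b ≤ j := le_sup_right
  have hcj : c ≤ j := le_sup_right.trans hjm1.ge
  have hmlta : m < a := lt_of_le_of_ne inf_le_left (fun h => nab (h ▸ inf_le_right))
  -- pick a cover m ⋖ x with x ≤ a
  obtain ⟨x, hcov, hxa⟩ := hmlta.exists_covby_le
  have hxb : x ⊓ b = m := le_antisymm (inf_le_inf_right b hxa) (le_inf hcov.le hmb)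
  have hxbj : x ⊔ b ≤ j := sup_le (hxa.trans haj) hbj
  -- b ⋖ x ⊔ b
  have hcov2 : b ⋖ x ⊔ b := covBy_sup_of_inf_covBy_left (a := x) (b := b) (hxb ▸ hcov)
  set x' := (x ⊔ b) ⊓ c with hx'
  have hx'b_sup : x' ⊔ b = x ⊔ b := by
    rw [hx', inf_sup_assoc_of_le c le_sup_right, sup_comm c b, ← hjm1]
    exact inf_eq_left.2 hxbj
  have hx'b_inf : x' ⊓ b = m := by
    rw [hx', inf_right_comm, inf_eq_right.2 (le_sup_right : b ≤ x ⊔ b), ← him1]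
  -- m ⋖ x'
  have hcov3 : m ⋖ x' := by
    have := inf_covBy_of_covBy_sup_right (a := x') (b := b) (hx'b_sup ▸ hcov2)
    rwa [hx'b_inf] at this
  have hx'a_inf : x' ⊓ a = m := by
    refine le_antisymm ?_ (le_inf hcov3.le inf_le_left)
    calc x' ⊓ a ≤ c ⊓ a := inf_le_inf_right a inf_le_right
    _ = m := by rw [inf_comm, ← him2, ← him1]
  set X := x' ⊔ a with hX
  -- a ⋖ X
  have hcov4 : a ⋖ X := covBy_sup_of_inf_covBy_left (a := x') (b := a) (hx'a_inf ▸ hcov3)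
  -- projectivity (x, m) ≡ (X, a)
  have hT1 : IntervalTranspose (x ⊔ b, b) (x, m) := ⟨x, b, rfl, by rw [hxb]⟩
  have hT2 : IntervalTranspose (x ⊔ b, b) (x', m) := ⟨x', b, by rw [hx'b_sup], by rw [hx'b_inf]⟩
  have hT3 : IntervalTranspose (X, a) (x', m) := ⟨x', a, by rw [hX], by rw [hx'a_inf]⟩
  have hequiv : IntervalEquiv (x, m) (X, a) :=
    Relation.EqvGen.trans _ _ _ (Relation.EqvGen.symm _ _ (Relation.EqvGen.rel _ _ hT1))
      (Relation.EqvGen.trans _ _ _ (Relation.EqvGen.rel _ _ hT2)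
        (Relation.EqvGen.symm _ _ (Relation.EqvGen.rel _ _ hT3)))
  -- build a maximal chain through m ≤ x ≤ a ≤ X
  have hchain : IsChain (· ≤ ·) ({m, x, a, X} : Set α) := by
    have h1 : m ≤ x := hcov.le
    have h2 : x ≤ a := hxa
    have h3 : a ≤ X := hcov4.le
    intro u hu v hv _
    simp only [Set.mem_insert_iff, Set.mem_singleton_iff] at hu hv
    rcases hu with rfl | rfl | rfl | rfl <;> rcases hv with rfl | rfl | rfl | rfl <;>
      first
        | exact Or.inl le_rfl
        | exact Or.inl h1
        | exact Or.inl h2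
        | exact Or.inl h3
        | exact Or.inl (h1.trans h2)
        | exact Or.inl (h2.trans h3)
        | exact Or.inl ((h1.trans h2).trans h3)
        | exact Or.inr h1
        | exact Or.inr h2
        | exact Or.inr h3
        | exact Or.inr (h1.trans h2)
        | exact Or.inr (h2.trans h3)
        | exact Or.inr ((h1.trans h2).trans h3)
  obtain ⟨C, hC, hsub⟩ := hchain.exists_maxChain
  have hx_mem : x ∈ C := hsub (by simp)
  have hm_mem : m ∈ C := hsub (by simp)
  have ha_mem : a ∈ C := hsub (by simp)
  have hX_mem : X ∈ C := hsub (by simp)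
  obtain ⟨-, hma⟩ := hmf C hC x hx_mem m hm_mem X hX_mem a ha_mem hcov hcov4 hequiv
  exact absurd hma hmlta.ne
end
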